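/- Let k ≥ 3 and let C_k be the cycle graph on [k] (viewed as a hypergraph whose edges are the k pairs {1,2},{2,3},...,{k−1,k},{k,1}). Then ω(GHZ^{C_k}_2, GHZ_2) = 1/2; that is, asymptotically two k-party GHZ states per copy of the cycle of EPR pairs can be obtained via SLOCC. -/

import Mathlib

open Finset Filter

/-- SLOCC convertibility between multipartite tensors, given by their coefficient
functions: party `j` has local space with basis indexed by `α j` resp. `β j`, and
`ψ →_SLOCC φ` iff there are local linear maps `A j` with `(A 1 ⊗ ⋯ ⊗ A k) ψ = φ`. -/
def SLOCCTo {k : ℕ} {α β : Fin k → Type} [∀ j, Fintype (α j)]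
    (ψ : ((j : Fin k) → α j) → ℂ) (φ : ((j : Fin k) → β j) → ℂ) : Prop :=
  ∃ A : (j : Fin k) → β j → α j → ℂ,
    ∀ y : (j : Fin k) → β j,
      φ y = ∑ x : (j : Fin k) → α j, (∏ j : Fin k, A j (y j) (x j)) * ψ x

/-- Party-wise `m`-th tensor power of a multipartite tensor. -/
def statePow {k : ℕ} {α : Fin k → Type} (ψ : ((j : Fin k) → α j) → ℂ) (m : ℕ) :
    ((j : Fin k) → Fin m → α j) → ℂ :=
  fun x => ∏ t : Fin m, ψ (fun j => x j t)

/-- `ω(ψ,φ) ≤ c`, where `ω(ψ,φ) = lim_{n→∞} (1/n)·inf{m | ψ^{⊗m} →_SLOCC φ^{⊗n}}`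
is the asymptotic SLOCC conversion rate (the infimum being `+∞` when no `m` works). -/
def AsympRateLE {k : ℕ} {α β : Fin k → Type} [∀ j, Fintype (α j)]
    (ψ : ((j : Fin k) → α j) → ℂ) (φ : ((j : Fin k) → β j) → ℂ) (c : ℝ) : Prop :=
  ∀ ε : ℝ, 0 < ε → ∀ᶠ n : ℕ in atTop,
    ∃ m : ℕ, SLOCCTo (statePow ψ m) (statePow φ n) ∧ (m : ℝ) ≤ (c + ε) * n

/-- `ω(ψ,φ) ≥ c`, where `ω` is the asymptotic SLOCC conversion rate. -/
def AsympRateGE {k : ℕ} {α β : Fin k → Type} [∀ j, Fintype (α j)]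
    (ψ : ((j : Fin k) → α j) → ℂ) (φ : ((j : Fin k) → β j) → ℂ) (c : ℝ) : Prop :=
  ∀ ε : ℝ, 0 < ε → ∀ᶠ n : ℕ in atTop,
    ∀ m : ℕ, SLOCCTo (statePow ψ m) (statePow φ n) → (c - ε) * n ≤ (m : ℝ)

/-- `ω(ψ,φ) = c`, where `ω` is the asymptotic SLOCC conversion rate. -/
def AsympRateEq {k : ℕ} {α β : Fin k → Type} [∀ j, Fintype (α j)]
    (ψ : ((j : Fin k) → α j) → ℂ) (φ : ((j : Fin k) → β j) → ℂ) (c : ℝ) : Prop :=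
  AsympRateLE ψ φ c ∧ AsympRateGE ψ φ c

/-- The `k`-party `r`-level GHZ state `Σ_{i=1}^r |i⟩^{⊗k}` (levels labelled `0,…,r-1`):
the coefficient of a basis vector is the number of levels `i` matching it. -/
noncomputable def ghzState (k r : ℕ) : ((_ : Fin k) → Fin r) → ℂ :=
  fun x => ((Finset.univ.filter (fun i : Fin r => ∀ j, x j = i)).card : ℂ)

/-- The state `GHZ^H_r = ⊗_{e∈E} GHZ_r^{(e)}` associated to a hypergraph `H` on `[k]`
with edge set `E` (the edge `e` being the set `H e` of vertices incident with it):
each edge carries an `r`-level GHZ state `Σ_i ⊗_{j ∈ H e} |i⟩_j` shared among its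
incident parties, padded with `|0⟩` at the remaining parties.  Equivalently, it is
`Σ_{i : E → {0,…,r-1}} ⊗_{j} |(i_e)_{e ∋ j}⟩_j`, so the coefficient of a basis vector
is the number of index tuples `i` producing it. -/
noncomputable def hyperGHZ {k : ℕ} {E : Type} [Fintype E] [DecidableEq E]
    (H : E → Finset (Fin k)) (r : ℕ) : ((j : Fin k) → E → Fin r) → ℂ :=
  fun x => ((Finset.univ.filter (fun i : E → Fin r =>
    ∀ j : Fin k, ∀ e : E, (x j e : ℕ) = if j ∈ H e then (i e : ℕ) else 0)).card : ℂ)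

namespace GhzCycle

variable {k : ℕ}

/-- next vertex on the cycle -/
def nxt (e : Fin k) : Fin k := ⟨(e.val + 1) % k, Nat.mod_lt _ e.pos⟩

/-- previous vertex on the cycle -/
def prv (e : Fin k) : Fin k := ⟨(e.val + (k - 1)) % k, Nat.mod_lt _ e.pos⟩

lemma nxt_val (e : Fin k) : (nxt e).val = if e.val + 1 = k then 0 else e.val + 1 := by
  have h := e.isLt
  rcases eq_or_ne (e.val + 1) k with h1 | h1
  · simp [nxt, h1]
  · have : e.val + 1 < k := by omega
    simp [nxt, Nat.mod_eq_of_lt this, h1]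

lemma prv_val (e : Fin k) : (prv e).val = if e.val = 0 then k - 1 else e.val - 1 := by
  have h := e.isLt
  have hk : 0 < k := e.pos
  rcases eq_or_ne e.val 0 with h1 | h1
  · simp [prv, h1, Nat.mod_eq_of_lt (by omega : k - 1 < k)]
  · have h2 : e.val + (k - 1) = (e.val - 1) + k := by omega
    simp [prv, h1, h2, Nat.add_mod_right, Nat.mod_eq_of_lt (by omega : e.val - 1 < k)]

lemma nxt_prv (e : Fin k) : nxt (prv e) = e := by
  have h := e.isLt
  have hk : 0 < k := e.pos
  apply Fin.ext
  rw [nxt_val, prv_val]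
  rcases eq_or_ne e.val 0 with h1 | h1
  · simp [h1]; omega
  · simp [h1]
    rcases eq_or_ne (e.val - 1 + 1) k with h2 | h2 <;> simp [h2] <;> omega

lemma prv_nxt (e : Fin k) : prv (nxt e) = e := by
  have h := e.isLt
  have hk : 0 < k := e.pos
  apply Fin.ext
  rw [prv_val, nxt_val]
  rcases eq_or_ne (e.val + 1) k with h1 | h1 <;> simp [h1] <;> omega

lemma nxt_bijective : Function.Bijective (nxt (k := k)) :=
  Function.bijective_iff_has_inverse.2 ⟨prv, prv_nxt, nxt_prv⟩

lemma prv_bijective : Function.Bijective (prv (k := k)) :=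
  Function.bijective_iff_has_inverse.2 ⟨nxt, nxt_prv, prv_nxt⟩

/-- the edge set of the cycle -/
def Hc (e : Fin k) : Finset (Fin k) := {e, nxt e}

lemma mem_Hc {j e : Fin k} : j ∈ Hc e ↔ j = e ∨ j = nxt e := by
  simp [Hc]


/-! ### Support of the cycle state and of GHZ -/

/-- one-copy padding -/
def pad (I : Fin k → Fin 2) : (j : Fin k) → Fin k → Fin 2 :=
  fun j e => if j ∈ Hc e then I e else 0

/-- `m`-copy padding -/
def Pad (m : ℕ) (I : Fin k → Fin m → Fin 2) : (j : Fin k) → Fin m → Fin k → Fin 2 :=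
  fun j t e => if j ∈ Hc e then I e t else 0

lemma pad_apply_self (I : Fin k → Fin 2) (e : Fin k) : pad I e e = I e := by
  simp [pad, mem_Hc]

lemma pad_injective : Function.Injective (pad (k := k)) := by
  intro I J h
  funext e
  rw [← pad_apply_self I e, ← pad_apply_self J e, h]

lemma Pad_injective (m : ℕ) : Function.Injective (Pad (k := k) m) := by
  intro I J h
  funext e t
  have h1 : Pad m I e t e = Pad m J e t e := by rw [h]
  simpa [Pad, mem_Hc] using h1

lemma hyperGHZ_cycle_eq (x : (j : Fin k) → Fin k → Fin 2) :
    hyperGHZ Hc 2 x = if ∃ I, x = pad I then 1 else 0 := by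
  have hpred : ∀ i : Fin k → Fin 2,
      (∀ j : Fin k, ∀ e : Fin k, (x j e : ℕ) = if j ∈ Hc e then (i e : ℕ) else 0)
        ↔ x = pad i := by
    intro i
    constructor
    · intro h
      funext j e
      have := h j e
      apply Fin.val_injective
      simpa [pad, apply_ite (Fin.val (n := 2))] using this
    · intro h j e
      rw [h]
      simp [pad, apply_ite (Fin.val (n := 2))]
  rw [hyperGHZ]
  by_cases h : ∃ I, x = pad I
  · rw [if_pos h]
    obtain ⟨I, hI⟩ := h
    norm_cast
    apply Finset.card_eq_one.mpr
    refine ⟨I, Finset.eq_singleton_iff_unique_mem.mpr ⟨?_, ?_⟩⟩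
    · simp only [Finset.mem_filter, Finset.mem_univ, true_and]
      exact (hpred I).mpr hI
    · intro i hi
      simp only [Finset.mem_filter, Finset.mem_univ, true_and] at hi
      exact pad_injective (((hpred i).mp hi).symm.trans hI)
  · rw [if_neg h]
    norm_cast
    apply Finset.card_eq_zero.mpr
    apply Finset.eq_empty_iff_forall_notMem.mpr
    intro i hi
    simp only [Finset.mem_filter, Finset.mem_univ, true_and] at hi
    exact h ⟨i, (hpred i).mp hi⟩

lemma cyclePow_eq (m : ℕ) (x : (j : Fin k) → Fin m → Fin k → Fin 2) :
    statePow (hyperGHZ Hc 2) m x = if ∃ I, x = Pad m I then 1 else 0 := by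
  rw [statePow]
  have : ∀ t : Fin m, hyperGHZ Hc 2 (fun j => x j t)
      = if ∃ i : Fin k → Fin 2, (fun j => x j t) = pad i then 1 else 0 := fun t =>
    hyperGHZ_cycle_eq _
  rw [Finset.prod_congr rfl (fun t _ => this t), Finset.prod_boole]
  congr 1
  simp only [eq_iff_iff]
  constructor
  · intro h
    choose i hi using fun t => h t (Finset.mem_univ t)
    refine ⟨fun e t => i t e, ?_⟩
    funext j t e
    have := congrFun (congrFun (hi t) j) e
    simpa [pad, Pad] using this
  · rintro ⟨I, rfl⟩ t _
    exact ⟨fun e => I e t, by funext j e; simp [pad, Pad]⟩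

/-- Master lemma: sum against the cycle-power state is a sum over edge labels. -/
lemma sum_cyclePow (m : ℕ) (f : ((j : Fin k) → Fin m → Fin k → Fin 2) → ℂ) :
    ∑ x : (j : Fin k) → Fin m → Fin k → Fin 2, f x * statePow (hyperGHZ Hc 2) m x
      = ∑ I : Fin k → Fin m → Fin 2, f (Pad m I) := by
  have h1 : ∀ x, f x * statePow (hyperGHZ Hc 2) m x
      = if x ∈ Finset.univ.image (Pad m) then f x else 0 := by
    intro x
    rw [cyclePow_eq]
    have hiff : (∃ I, x = Pad m I) ↔ x ∈ Finset.univ.image (Pad m) := by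
      simp only [Finset.mem_image, Finset.mem_univ, true_and]
      constructor
      · rintro ⟨I, rfl⟩; exact ⟨I, rfl⟩
      · rintro ⟨I, rfl⟩; exact ⟨I, rfl⟩
    by_cases h : ∃ I, x = Pad m I
    · rw [if_pos h, if_pos (hiff.mp h), mul_one]
    · rw [if_neg h, if_neg (fun hx => h (hiff.mpr hx)), mul_zero]
  rw [Finset.sum_congr rfl (fun x _ => h1 x), Finset.sum_ite_mem, Finset.univ_inter]
  exact Finset.sum_image (fun a _ b _ h => Pad_injective m h)

lemma ghz_eq (hk : 0 < k) (x : (_ : Fin k) → Fin 2) :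
    ghzState k 2 x = if ∀ j, x j = x ⟨0, hk⟩ then 1 else 0 := by
  rw [ghzState]
  by_cases h : ∀ j, x j = x ⟨0, hk⟩
  · rw [if_pos h]
    norm_cast
    apply Finset.card_eq_one.mpr
    refine ⟨x ⟨0, hk⟩, Finset.eq_singleton_iff_unique_mem.mpr ⟨?_, ?_⟩⟩
    · simp only [Finset.mem_filter, Finset.mem_univ, true_and]
      exact h
    · intro i hi
      simp only [Finset.mem_filter, Finset.mem_univ, true_and] at hi
      exact (hi ⟨0, hk⟩).symm
  · rw [if_neg h]
    norm_cast
    apply Finset.card_eq_zero.mpr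
    apply Finset.eq_empty_iff_forall_notMem.mpr
    intro i hi
    simp only [Finset.mem_filter, Finset.mem_univ, true_and] at hi
    exact h fun j => (hi j).trans (hi ⟨0, hk⟩).symm

lemma ghzPow_eq (hk : 0 < k) (n : ℕ) (y : (_ : Fin k) → Fin n → Fin 2) :
    statePow (ghzState k 2) n y = if ∀ j, y j = y ⟨0, hk⟩ then 1 else 0 := by
  rw [statePow]
  rw [Finset.prod_congr rfl (fun t _ => ghz_eq hk _), Finset.prod_boole]
  congr 1
  simp only [eq_iff_iff]
  constructor
  · intro h j
    funext t
    exact h t (Finset.mem_univ t) j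
  · intro h t _ j
    rw [h j]


/-! ### Lower bound -/

lemma mem_Hc_zero (hk : 3 ≤ k) (e : Fin k) :
    (⟨0, by linarith⟩ : Fin k) ∈ Hc e ↔ e = ⟨0, by linarith⟩ ∨ e = prv ⟨0, by linarith⟩ := by
  rw [mem_Hc]
  constructor
  · rintro (h | h)
    · exact Or.inl h.symm
    · have h2 := congrArg prv h
      rw [prv_nxt] at h2
      exact Or.inr h2.symm
  · rintro (rfl | rfl)
    · exact Or.inl rfl
    · exact Or.inr (nxt_prv _).symm

lemma lower_bound (hk : 3 ≤ k) (n m : ℕ)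
    (h : SLOCCTo (statePow (hyperGHZ Hc 2) m) (statePow (ghzState k 2) n)) :
    n ≤ 2 * m := by
  have hk0 : 0 < k := by omega
  set j0 : Fin k := ⟨0, hk0⟩ with hj0
  set lst : Fin k := prv j0 with hlst
  obtain ⟨A, hA⟩ := h
  set pd : ((Fin m → Fin 2) × (Fin m → Fin 2)) → (Fin m → Fin k → Fin 2) :=
    fun p t e => if e = j0 then p.1 t else if e = lst then p.2 t else 0 with hpd
  have hPadj0 : ∀ I : Fin k → Fin m → Fin 2, Pad m I j0 = pd (I j0, I lst) := by
    intro I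
    funext t e
    show (if j0 ∈ Hc e then I e t else 0)
      = (if e = j0 then I j0 t else if e = lst then I lst t else 0)
    by_cases h1 : e = j0
    · rw [if_pos ((mem_Hc_zero hk e).mpr (Or.inl h1)), if_pos h1, h1]
    · by_cases h2 : e = lst
      · rw [if_pos ((mem_Hc_zero hk e).mpr (Or.inr h2)), if_neg h1, if_pos h2, h2]
      · rw [if_neg, if_neg h1, if_neg h2]
        intro hcon
        rcases (mem_Hc_zero hk e).mp hcon with h3 | h3
        · exact h1 h3
        · exact h2 h3
  set B : Matrix (Fin n → Fin 2) ((Fin m → Fin 2) × (Fin m → Fin 2)) ℂ :=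
    fun y p => A j0 y (pd p) with hB
  set C : Matrix ((Fin m → Fin 2) × (Fin m → Fin 2)) (Fin n → Fin 2) ℂ :=
    fun p s => ∑ I ∈ Finset.univ.filter
        (fun I : Fin k → Fin m → Fin 2 => (I j0, I lst) = p),
      ∏ j ∈ Finset.univ.erase j0, A j s (Pad m I j) with hC
  have hBC : (1 : Matrix (Fin n → Fin 2) (Fin n → Fin 2) ℂ) = B * C := by
    ext y s
    rw [Matrix.mul_apply, Matrix.one_apply]
    set Y : (_ : Fin k) → Fin n → Fin 2 := fun j => if j = j0 then y else s with hY
    have hYj0 : Y j0 = y := by rw [hY]; exact if_pos rfl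
    have hYne : ∀ j, j ≠ j0 → Y j = s := by
      intro j hj; rw [hY]; exact if_neg hj
    have key : ∀ I : Fin k → Fin m → Fin 2,
        A j0 y (pd (I j0, I lst)) * ∏ j ∈ Finset.univ.erase j0, A j s (Pad m I j)
          = ∏ j : Fin k, A j (Y j) (Pad m I j) := by
      intro I
      rw [← Finset.mul_prod_erase Finset.univ _ (Finset.mem_univ j0)]
      congr 1
      · rw [← hPadj0, hYj0]
      · apply Finset.prod_congr rfl
        intro j hj
        simp only [Finset.mem_erase] at hj
        rw [hYne j hj.1]
    symm
    calc ∑ p, B y p * C p s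
        = ∑ p, ∑ I ∈ Finset.univ.filter
            (fun I : Fin k → Fin m → Fin 2 => (I j0, I lst) = p),
            ∏ j : Fin k, A j (Y j) (Pad m I j) := by
          apply Finset.sum_congr rfl
          intro p _
          rw [hB, hC, Finset.mul_sum]
          apply Finset.sum_congr rfl
          intro I hI
          simp only [Finset.mem_filter] at hI
          rw [← hI.2, key I]
      _ = ∑ I : Fin k → Fin m → Fin 2, ∏ j : Fin k, A j (Y j) (Pad m I j) :=
          Finset.sum_fiberwise _ _ _
      _ = ∑ x : (j : Fin k) → Fin m → Fin k → Fin 2,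
            (∏ j : Fin k, A j (Y j) (x j)) * statePow (hyperGHZ Hc 2) m x :=
          (sum_cyclePow m (fun x => ∏ j : Fin k, A j (Y j) (x j))).symm
      _ = statePow (ghzState k 2) n Y := (hA Y).symm
      _ = if y = s then 1 else 0 := by
          rw [ghzPow_eq hk0 n Y]
          apply if_congr _ rfl rfl
          constructor
          · intro h2
            have hne : (⟨1, by omega⟩ : Fin k) ≠ j0 := by
              intro hcon
              have := congrArg Fin.val hcon
              simp [hj0] at this
            have h3 := h2 ⟨1, by omega⟩
            rw [hYne _ hne, hYj0] at h3
            exact h3.symm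
          · intro h2 j
            by_cases hj : j = j0
            · rw [hj]
            · rw [hYne j hj, hYj0, h2]
  have hrank : (2 : ℕ)^n ≤ 2^m * 2^m := by
    calc (2:ℕ)^n = Fintype.card (Fin n → Fin 2) := by simp
      _ = (1 : Matrix (Fin n → Fin 2) (Fin n → Fin 2) ℂ).rank := (Matrix.rank_one).symm
      _ = (B * C).rank := by rw [hBC]
      _ ≤ B.rank := Matrix.rank_mul_le_left B C
      _ ≤ Fintype.card ((Fin m → Fin 2) × (Fin m → Fin 2)) := Matrix.rank_le_card_width B
      _ = 2^m * 2^m := by simp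
  have h2n : (2:ℕ)^n ≤ 2^(2*m) := by
    rw [two_mul, pow_add]
    exact hrank
  exact (Nat.pow_le_pow_iff_right (by norm_num)).mp h2n


/-! ### Digits -/

/-- value of a digit string in base `B` -/
def dsum (B : ℕ) {t : ℕ} (u : Fin t → ℕ) : ℕ := ∑ i, u i * B ^ (i : ℕ)

lemma dsum_succ (B : ℕ) {t : ℕ} (u : Fin (t + 1) → ℕ) :
    dsum B u = u 0 + B * dsum B (fun i => u i.succ) := by
  rw [dsum, Fin.sum_univ_succ]
  congr 1
  · simp
  · rw [dsum, Finset.mul_sum]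
    apply Finset.sum_congr rfl
    intro i _
    rw [Fin.val_succ, pow_succ]
    ring

lemma dsum_lt (B : ℕ) (hB : 1 ≤ B) : ∀ {t : ℕ} (u : Fin t → ℕ),
    (∀ i, u i < B) → dsum B u < B ^ t := by
  intro t
  induction t with
  | zero => intro u _; simp [dsum]
  | succ t ih =>
    intro u hu
    rw [dsum_succ]
    have h1 := ih (fun i => u i.succ) (fun i => hu i.succ)
    have h2 := hu 0
    have h3 : B * dsum B (fun i => u i.succ) ≤ B * (B ^ t - 1) :=
      Nat.mul_le_mul_left B (by omega)
    have h5 : 1 ≤ B ^ t := Nat.one_le_pow t B (by omega)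
    have h4 : B * (B ^ t - 1) + B = B * B ^ t := by
      calc B * (B ^ t - 1) + B = B * ((B ^ t - 1) + 1) := (Nat.mul_succ _ _).symm
        _ = B * B ^ t := by congr 1; omega
    rw [pow_succ, mul_comm (B ^ t) B]
    omega

lemma dsum_inj (B : ℕ) : ∀ {t : ℕ} (u v : Fin t → ℕ),
    (∀ i, u i < B) → (∀ i, v i < B) → dsum B u = dsum B v → u = v := by
  intro t
  induction t with
  | zero => intro u v _ _ _; funext i; exact i.elim0
  | succ t ih =>
    intro u v hu hv h
    rw [dsum_succ, dsum_succ] at h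
    have hB : 0 < B := Nat.pos_of_ne_zero (by intro h0; rw [h0] at hu; exact absurd (hu 0) (by omega))
    have h0 : u 0 = v 0 := by
      have h1 : (u 0 + B * dsum B (fun i => u i.succ)) % B = u 0 % B := by
        simp [Nat.add_mul_mod_self_left]
      have h2 : (v 0 + B * dsum B (fun i => v i.succ)) % B = v 0 % B := by
        simp [Nat.add_mul_mod_self_left]
      rw [Nat.mod_eq_of_lt (hu 0)] at h1
      rw [Nat.mod_eq_of_lt (hv 0)] at h2
      rw [← h1, ← h2, h]
    have htail : dsum B (fun i => u i.succ) = dsum B (fun i => v i.succ) := by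
      have := h
      rw [h0] at this
      have h2 : B * dsum B (fun i => u i.succ) = B * dsum B (fun i => v i.succ) := by omega
      exact Nat.eq_of_mul_eq_mul_left hB h2
    have := ih (fun i => u i.succ) (fun i => v i.succ) (fun i => hu i.succ) (fun i => hv i.succ) htail
    funext i
    induction i using Fin.cases with
    | zero => exact h0
    | succ i => exact congrFun this i

/-! ### The Behrend-type set -/

/-- digit strings with squares summing to `R` -/
def digitSet (d t R : ℕ) : Finset (Fin t → ℕ) :=
  (Fintype.piFinset (fun _ : Fin t => Finset.range (2 ^ d))).filter
    (fun a => ∑ i, (a i) ^ 2 = R)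

lemma digitSet_digit_lt {d t R : ℕ} {a : Fin t → ℕ} (ha : a ∈ digitSet d t R) (i : Fin t) :
    a i < 2 ^ d := by
  rw [digitSet, Finset.mem_filter, Fintype.mem_piFinset] at ha
  exact Finset.mem_range.mp (ha.1 i)

lemma digitSet_sq_sum {d t R : ℕ} {a : Fin t → ℕ} (ha : a ∈ digitSet d t R) :
    ∑ i, (a i) ^ 2 = R := by
  rw [digitSet, Finset.mem_filter] at ha
  exact ha.2

/-- The Behrend-type set: values of digit strings on the sphere of radius `R`,
in base `2^(k+d)`. -/
def behrendSet (k d t R : ℕ) : Finset ℕ :=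
  (digitSet d t R).image (dsum (2 ^ (k + d)))

lemma two_pow_mono {d k : ℕ} : (2:ℕ) ^ d ≤ 2 ^ (k + d) :=
  Nat.pow_le_pow_right (by norm_num) (Nat.le_add_left d k)

lemma behrendSet_lt {k d t R : ℕ} {y : ℕ} (hy : y ∈ behrendSet k d t R) :
    y < 2 ^ ((k + d) * t) := by
  rw [behrendSet, Finset.mem_image] at hy
  obtain ⟨a, ha, rfl⟩ := hy
  rw [pow_mul]
  exact dsum_lt _ Nat.one_le_two_pow a
    (fun i => lt_of_lt_of_le (digitSet_digit_lt ha i) two_pow_mono)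

lemma behrendSet_card {k d t R : ℕ} : (behrendSet k d t R).card = (digitSet d t R).card := by
  rw [behrendSet]
  apply Finset.card_image_of_injOn
  intro a ha b hb hab
  exact dsum_inj _ a b
    (fun i => lt_of_lt_of_le (digitSet_digit_lt ha i) two_pow_mono)
    (fun i => lt_of_lt_of_le (digitSet_digit_lt hb i) two_pow_mono)
    hab

/-- Key pigeonhole: some sphere radius captures many digit strings. -/
lemma exists_good_R (d t : ℕ) (ht : 1 ≤ t) :
    ∃ R, 2 ^ (d * t) ≤ (digitSet d t R).card * (t * 2 ^ (2 * d)) := by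
  have hmem : ∀ a ∈ Fintype.piFinset (fun _ : Fin t => Finset.range (2 ^ d)),
      (∑ i, (a i) ^ 2) ∈ Finset.range (t * 2 ^ (2 * d)) := by
    intro a ha
    rw [Finset.mem_range]
    rw [Fintype.mem_piFinset] at ha
    have h1 : ∀ i : Fin t, (a i) ^ 2 ≤ 2 ^ (2 * d) - 1 := by
      intro i
      have h2 : a i ≤ 2 ^ d - 1 := by
        have := Finset.mem_range.mp (ha i); omega
      have h3 : (a i) ^ 2 ≤ (2 ^ d - 1) ^ 2 := Nat.pow_le_pow_left h2 2
      have h4 : (2 ^ d - 1) ^ 2 < 2 ^ (2 * d) := by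
        have h5 : (1 : ℕ) ≤ 2 ^ d := Nat.one_le_two_pow
        have h6 : (2 ^ d - 1) ^ 2 < (2 ^ d) ^ 2 :=
          Nat.pow_lt_pow_left (by omega) (by norm_num)
        rw [two_mul, pow_add]
        calc (2 ^ d - 1) ^ 2 < (2 ^ d) ^ 2 := h6
          _ = 2 ^ d * 2 ^ d := sq (2^d) ▸ rfl
      omega
    calc ∑ i, (a i) ^ 2 ≤ ∑ _i : Fin t, (2 ^ (2 * d) - 1) := Finset.sum_le_sum (fun i _ => h1 i)
      _ = t * (2 ^ (2 * d) - 1) := by rw [Finset.sum_const, Finset.card_univ, Fintype.card_fin, smul_eq_mul]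
      _ < t * 2 ^ (2 * d) := by
          have : (1:ℕ) ≤ 2 ^ (2*d) := Nat.one_le_two_pow
          have := Nat.mul_le_mul_left t (show 2 ^ (2*d) - 1 + 1 ≤ 2 ^ (2*d) by omega)
          have ht2 : t * (2 ^ (2*d) - 1) + t = t * (2 ^ (2*d) - 1 + 1) := by ring
          omega
  have htotal : (Fintype.piFinset (fun _ : Fin t => Finset.range (2 ^ d))).card
      = ∑ R ∈ Finset.range (t * 2 ^ (2 * d)), (digitSet d t R).card :=
    Finset.card_eq_sum_card_fiberwise hmem
  have hcardpi : (Fintype.piFinset (fun _ : Fin t => Finset.range (2 ^ d))).card = 2 ^ (d * t) := by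
    rw [Fintype.card_piFinset]
    simp [Finset.card_range, Finset.prod_const, mul_comm, pow_mul]
  obtain ⟨R, hR, hmax⟩ := Finset.exists_max_image (Finset.range (t * 2 ^ (2 * d)))
    (fun R => (digitSet d t R).card)
    ⟨0, Finset.mem_range.mpr (by positivity)⟩
  refine ⟨R, ?_⟩
  calc 2 ^ (d * t) = ∑ R' ∈ Finset.range (t * 2 ^ (2 * d)), (digitSet d t R').card := by
        rw [← htotal, hcardpi]
    _ ≤ (Finset.range (t * 2 ^ (2 * d))).card • (digitSet d t R).card :=
        Finset.sum_le_card_nsmul _ _ _ (fun x hx => hmax x hx)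
    _ = (digitSet d t R).card * (t * 2 ^ (2 * d)) := by
        rw [Finset.card_range, smul_eq_mul, mul_comm]

/-- The Behrend property: no nontrivial solutions of `y₁+⋯+y_{k-1} = (k-1)·y₀`. -/
lemma behrend_free {k : ℕ} (hk : 3 ≤ k) (d t R : ℕ) (v : Fin k → ℕ)
    (hv : ∀ e, v e ∈ behrendSet k d t R)
    (hsum : ∑ e ∈ Finset.univ.erase (⟨0, by linarith⟩ : Fin k), v e
      = (k - 1) * v ⟨0, by linarith⟩) :
    ∀ e, v e = v ⟨0, by linarith⟩ := by
  set j0 : Fin k := ⟨0, by omega⟩ with hj0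
  set er : Finset (Fin k) := Finset.univ.erase j0 with her
  set B : ℕ := 2 ^ (k + d) with hBdef
  have hch : ∀ e, ∃ a ∈ digitSet d t R, dsum B a = v e := by
    intro e
    have := hv e
    rw [behrendSet, Finset.mem_image] at this
    obtain ⟨a, ha, h2⟩ := this
    exact ⟨a, ha, h2⟩
  choose a ha hav using hch
  have halt : ∀ e i, a e i < 2 ^ d := fun e i => digitSet_digit_lt (ha e) i
  have hcard : er.card = k - 1 := by
    rw [her, Finset.card_erase_of_mem (Finset.mem_univ _), Finset.card_univ, Fintype.card_fin]
  have hbound : (k - 1) * (2 ^ d - 1) < B := by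
    have h1 : k - 1 < 2 ^ k := lt_of_le_of_lt (Nat.sub_le k 1) (Nat.lt_two_pow_self (n := k))
    have h2 : (k - 1) * (2 ^ d - 1) ≤ (k - 1) * 2 ^ d :=
      Nat.mul_le_mul_left _ (Nat.sub_le _ _)
    have h3 : (k - 1) * 2 ^ d < 2 ^ k * 2 ^ d :=
      (Nat.mul_lt_mul_right (by positivity : (0:ℕ) < 2 ^ d)).mpr h1
    rw [hBdef, pow_add]
    omega
  -- digit-wise identity
  have hdig : ∀ i : Fin t, ∑ e ∈ er, a e i = (k - 1) * a j0 i := by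
    have hL : ∑ e ∈ er, v e = dsum B (fun i => ∑ e ∈ er, a e i) := by
      calc ∑ e ∈ er, v e = ∑ e ∈ er, ∑ i : Fin t, a e i * B ^ (i : ℕ) :=
            Finset.sum_congr rfl (fun e _ => ((hav e) ▸ rfl))
        _ = ∑ i : Fin t, ∑ e ∈ er, a e i * B ^ (i : ℕ) := Finset.sum_comm
        _ = ∑ i : Fin t, (∑ e ∈ er, a e i) * B ^ (i : ℕ) :=
            Finset.sum_congr rfl (fun i _ => (Finset.sum_mul _ _ _).symm)
    have hR : (k - 1) * v j0 = dsum B (fun i => (k - 1) * a j0 i) := by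
      calc (k - 1) * v j0 = (k - 1) * ∑ i : Fin t, a j0 i * B ^ (i : ℕ) := by
            rw [← hav j0]; rfl
        _ = ∑ i : Fin t, (k - 1) * (a j0 i * B ^ (i : ℕ)) := Finset.mul_sum _ _ _
        _ = ∑ i : Fin t, ((k - 1) * a j0 i) * B ^ (i : ℕ) :=
            Finset.sum_congr rfl (fun i _ => (mul_assoc _ _ _).symm)
    have h1 : dsum B (fun i => ∑ e ∈ er, a e i) = dsum B (fun i => (k - 1) * a j0 i) := by
      rw [← hL, ← hR, hsum]
    have h2 := dsum_inj B (fun i => ∑ e ∈ er, a e i) (fun i => (k - 1) * a j0 i)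
      (fun i => by
        have hle : ∑ e ∈ er, a e i ≤ er.card • (2 ^ d - 1) :=
          Finset.sum_le_card_nsmul _ _ _ (fun e _ => by have := halt e i; omega)
        rw [hcard, smul_eq_mul] at hle
        show (∑ e ∈ er, a e i) < B
        omega)
      (fun i => by
        have h3 : (k - 1) * a j0 i ≤ (k - 1) * (2 ^ d - 1) :=
          Nat.mul_le_mul_left _ (by have := halt j0 i; omega)
        show (k - 1) * a j0 i < B
        omega)
      h1
    exact fun i => congrFun h2 i
  -- sum of squares is zero
  have hsq : ∑ e ∈ er, ∑ i : Fin t, ((a e i : ℤ) - (a j0 i : ℤ)) ^ 2 = 0 := by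
    have hsph : ∀ e, ∑ i : Fin t, ((a e i : ℤ)) ^ 2 = (R : ℤ) := by
      intro e
      have := digitSet_sq_sum (ha e)
      exact_mod_cast congrArg (fun x : ℕ => (x : ℤ)) this
    have key : ∀ e ∈ er, ∑ i : Fin t, ((a e i : ℤ) - (a j0 i : ℤ)) ^ 2
        = 2 * (R : ℤ) - 2 * ∑ i : Fin t, (a e i : ℤ) * (a j0 i : ℤ) := by
      intro e _
      have expand : ∀ i : Fin t, ((a e i : ℤ) - (a j0 i : ℤ)) ^ 2
          = ((a e i : ℤ)) ^ 2 + ((a j0 i : ℤ)) ^ 2 - 2 * ((a e i : ℤ) * (a j0 i : ℤ)) := by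
        intro i; ring
      rw [Finset.sum_congr rfl (fun i _ => expand i), Finset.sum_sub_distrib,
        Finset.sum_add_distrib, hsph e, hsph j0, ← Finset.mul_sum]
      ring
    rw [Finset.sum_congr rfl key, Finset.sum_sub_distrib, Finset.sum_const, hcard]
    have hmid : ∑ e ∈ er, ∑ i : Fin t, (a e i : ℤ) * (a j0 i : ℤ) = (k - 1 : ℕ) * (R : ℤ) := by
      calc ∑ e ∈ er, ∑ i : Fin t, (a e i : ℤ) * (a j0 i : ℤ)
          = ∑ i : Fin t, ∑ e ∈ er, (a e i : ℤ) * (a j0 i : ℤ) := Finset.sum_comm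
        _ = ∑ i : Fin t, (∑ e ∈ er, (a e i : ℤ)) * (a j0 i : ℤ) :=
            Finset.sum_congr rfl (fun i _ => (Finset.sum_mul _ _ _).symm)
        _ = ∑ i : Fin t, ((k - 1 : ℕ) : ℤ) * ((a j0 i : ℤ) * (a j0 i : ℤ)) := by
            apply Finset.sum_congr rfl
            intro i _
            have : ∑ e ∈ er, (a e i : ℤ) = ((k - 1) * a j0 i : ℕ) := by
              rw [← hdig i]; push_cast; rfl
            rw [this]; push_cast; ring
        _ = ((k - 1 : ℕ) : ℤ) * ∑ i : Fin t, (a j0 i : ℤ) ^ 2 := by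
            rw [← Finset.mul_sum]
            congr 1
            exact Finset.sum_congr rfl (fun i _ => by ring)
        _ = (k - 1 : ℕ) * (R : ℤ) := by rw [hsph j0]
    have hfin : ∑ e ∈ er, 2 * ∑ i : Fin t, (a e i : ℤ) * (a j0 i : ℤ)
        = 2 * ((k - 1 : ℕ) * (R : ℤ)) := by
      rw [← Finset.mul_sum, hmid]
    rw [hfin, nsmul_eq_mul]
    ring
  -- conclude
  have hzero : ∀ e ∈ er, ∀ i : Fin t, ((a e i : ℤ) - (a j0 i : ℤ)) ^ 2 = 0 := by
    intro e he i
    have h1 := (Finset.sum_eq_zero_iff_of_nonneg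
      (fun e _ => Finset.sum_nonneg (fun i _ => sq_nonneg _))).mp hsq e he
    exact (Finset.sum_eq_zero_iff_of_nonneg (fun i _ => sq_nonneg _)).mp h1 i (Finset.mem_univ i)
  intro e
  by_cases he : e = j0
  · rw [he]
  · have hae : a e = a j0 := by
      funext i
      have := hzero e (Finset.mem_erase.mpr ⟨he, Finset.mem_univ e⟩) i
      have h2 : (a e i : ℤ) - (a j0 i : ℤ) = 0 := by
        exact pow_eq_zero_iff (by norm_num) |>.mp this
      have h3 : (a e i : ℤ) = (a j0 i : ℤ) := by omega
      exact_mod_cast h3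
    rw [← hav e, ← hav j0, hae]


/-! ### Upper bound: the SLOCC protocol -/

/-- binary digit vector of a natural number -/
def tovec (m : ℕ) (N : ℕ) : Fin m → Fin 2 := fun t => if N.testBit t.val then 1 else 0

lemma tovec_inj {m a b : ℕ} (ha : a < 2 ^ m) (hb : b < 2 ^ m) (h : tovec m a = tovec m b) :
    a = b := by
  apply Nat.eq_of_testBit_eq
  intro i
  by_cases hi : i < m
  · have h2 := congrFun h ⟨i, hi⟩
    simp only [tovec] at h2
    cases h1 : a.testBit i <;> cases h3 : b.testBit i <;>
      simp only [h1, h3] at h2 ⊢ <;>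
      first
        | rfl
        | (exfalso; revert h2; simp only [if_true, if_false]; decide)
  · have h1 : a.testBit i = false :=
      Nat.testBit_lt_two_pow (lt_of_lt_of_le ha (Nat.pow_le_pow_right (by norm_num) (by omega)))
    have h2 : b.testBit i = false :=
      Nat.testBit_lt_two_pow (lt_of_lt_of_le hb (Nat.pow_le_pow_right (by norm_num) (by omega)))
    rw [h1, h2]

lemma Pad_eq_iff {m : ℕ} (I J : Fin k → Fin m → Fin 2) (j : Fin k) :
    Pad m I j = Pad m J j ↔ (I j = J j ∧ I (prv j) = J (prv j)) := by
  constructor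
  · intro h
    constructor
    · funext t'
      have h2 := congrFun (congrFun h t') j
      simpa only [Pad, if_pos (mem_Hc.mpr (Or.inl rfl) : j ∈ Hc j)] using h2
    · funext t'
      have h2 := congrFun (congrFun h t') (prv j)
      simpa only [Pad, if_pos (mem_Hc.mpr (Or.inr (nxt_prv j).symm) : j ∈ Hc (prv j))] using h2
  · rintro ⟨h1, h2⟩
    funext t' e
    simp only [Pad]
    by_cases hmem : j ∈ Hc e
    · rw [if_pos hmem, if_pos hmem]
      rcases mem_Hc.mp hmem with h3 | h3
      · rw [← h3]
        exact congrFun h1 t'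
      · have h4 : prv j = e := by rw [h3, prv_nxt]
        rw [← h4]
        exact congrFun h2 t'
    · rw [if_neg hmem, if_neg hmem]

lemma cond_iff {m : ℕ} (I : Fin k → Fin m → Fin 2) (g : Fin k → Fin k → Fin m → Fin 2) :
    (∀ j, Pad m I j = Pad m (g j) j) ↔ (∀ e, I e = g e e ∧ I e = g (nxt e) e) := by
  constructor
  · intro h e
    refine ⟨((Pad_eq_iff I (g e) e).mp (h e)).1, ?_⟩
    have h2 := ((Pad_eq_iff I (g (nxt e)) (nxt e)).mp (h (nxt e))).2
    rwa [prv_nxt] at h2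
  · intro h j
    apply (Pad_eq_iff _ _ j).mpr
    refine ⟨(h j).1, ?_⟩
    have h2 := (h (prv j)).2
    rwa [nxt_prv] at h2

/-- The construction: given a large Behrend set, a cycle power converts to a GHZ power. -/
lemma construction (hk : 3 ≤ k) (d t R n : ℕ)
    (hY : 2 ^ n ≤ 2 ^ ((k + d) * t) * (behrendSet k d t R).card) :
    SLOCCTo (statePow (hyperGHZ Hc 2) ((k + d) * t + k + 1))
      (statePow (ghzState k 2) n) := by
  have hk0 : 0 < k := by omega
  set j0 : Fin k := ⟨0, hk0⟩ with hj0
  set m : ℕ := (k + d) * t + k + 1 with hm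
  set Q1 : ℕ := 2 ^ ((k + d) * t) with hQ1
  set Y : Finset ℕ := behrendSet k d t R with hYdef
  have hQ1pos : 0 < Q1 := by positivity
  -- encoding of GHZ indices
  set num : (Fin n → Fin 2) → ℕ := fun s => dsum 2 (fun i => (s i).val) with hnum
  have hnum_lt : ∀ s, num s < 2 ^ n := fun s =>
    dsum_lt 2 (by norm_num) _ (fun i => (s i).isLt)
  have hnum_inj : Function.Injective num := by
    intro s s' h
    have := dsum_inj 2 _ _ (fun i => (s i).isLt) (fun i => (s' i).isLt) h
    funext i
    exact Fin.val_injective (congrFun this i)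
  have hidx : ∀ s, num s / Q1 < Y.card := by
    intro s
    rw [Nat.div_lt_iff_lt_mul hQ1pos]
    calc num s < 2 ^ n := hnum_lt s
      _ ≤ Q1 * Y.card := hY
      _ = Y.card * Q1 := mul_comm _ _
  set ypart : (Fin n → Fin 2) → ℕ :=
    fun s => Y.orderEmbOfFin rfl ⟨num s / Q1, hidx s⟩ with hypart
  set xpart : (Fin n → Fin 2) → ℕ := fun s => num s % Q1 with hxpart
  have hymem : ∀ s, ypart s ∈ Y := fun s => Finset.orderEmbOfFin_mem Y rfl _
  have hylt : ∀ s, ypart s < Q1 := fun s => behrendSet_lt (hymem s)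
  have hxlt : ∀ s, xpart s < Q1 := fun s => Nat.mod_lt _ hQ1pos
  have hparts : ∀ s s', xpart s = xpart s' → ypart s = ypart s' → s = s' := by
    intro s s' hx hy2
    have h1 : num s / Q1 = num s' / Q1 := by
      have := (Y.orderEmbOfFin rfl).injective hy2
      exact congrArg Fin.val this
    apply hnum_inj
    have h2 := Nat.div_add_mod (num s) Q1
    have h3 := Nat.div_add_mod (num s') Q1
    rw [h1] at h2
    simp only [hxpart] at hx
    omega
  set encN : (Fin n → Fin 2) → Fin k → ℕ := fun s e => xpart s + e.val * ypart s with hencN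
  have henclt : ∀ s e, encN s e < 2 ^ m := by
    intro s e
    have h1 : e.val * ypart s ≤ (k - 1) * Q1 :=
      Nat.mul_le_mul (by have := e.isLt; omega) (le_of_lt (hylt s))
    have h2 : (k - 1) * Q1 + Q1 = k * Q1 := by
      have : (k - 1) + 1 = k := by omega
      calc (k - 1) * Q1 + Q1 = ((k - 1) + 1) * Q1 := by ring
        _ = k * Q1 := by rw [this]
    have h3 : k * Q1 ≤ 2 ^ (k + 1) * Q1 :=
      Nat.mul_le_mul_right _ (le_of_lt (lt_of_lt_of_le (Nat.lt_two_pow_self (n := k))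
        (Nat.pow_le_pow_right (by norm_num) (by omega))))
    have h4 : (2 : ℕ) ^ m = 2 ^ (k + 1) * Q1 := by
      rw [hm, hQ1, ← pow_add]
      congr 1
      ring
    have h5 := hxlt s
    show xpart s + e.val * ypart s < 2 ^ m
    omega
  set encI : (Fin n → Fin 2) → Fin k → Fin m → Fin 2 :=
    fun s e => tovec m (encN s e) with hencI
  refine ⟨fun j s x => if x = Pad m (encI s) j then 1 else 0, ?_⟩
  intro y
  rw [ghzPow_eq hk0 n y]
  rw [sum_cyclePow m (fun x => ∏ j : Fin k, if x j = Pad m (encI (y j)) j then 1 else 0)]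
  simp only [Finset.prod_boole]
  by_cases hy : ∀ j, y j = y ⟨0, hk0⟩
  · rw [if_pos hy]
    have hc : ∀ I : Fin k → Fin m → Fin 2,
        (∀ j ∈ Finset.univ, Pad m I j = Pad m (encI (y j)) j) ↔ I = encI (y j0) := by
      intro I
      constructor
      · intro h
        have h2 := (cond_iff I (fun j => encI (y j))).mp (fun j => h j (Finset.mem_univ j))
        funext e
        exact ((h2 e).1).trans (by rw [hy e])
      · rintro rfl
        intro j _
        apply (cond_iff (encI (y j0)) (fun j => encI (y j))).mpr
        · intro e
          exact ⟨by rw [hy e], by rw [hy (nxt e)]⟩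
    symm
    refine (Finset.sum_eq_single_of_mem (encI (y j0)) (Finset.mem_univ _) ?_).trans ?_
    · intro I _ hI
      exact if_neg (fun hcon => hI ((hc I).mp hcon))
    · exact if_pos ((hc _).mpr rfl)
  · rw [if_neg hy]
    symm
    apply Finset.sum_eq_zero
    intro I _
    apply if_neg
    intro hcond
    apply hy
    have hc := (cond_iff I (fun j => encI (y j))).mp (fun j => hcond j (Finset.mem_univ j))
    -- the numeric relations around the cycle
    have hvN : ∀ e, encN (y e) e = encN (y (nxt e)) e := by
      intro e
      exact tovec_inj (henclt _ _) (henclt _ _) (((hc e).1).symm.trans ((hc e).2))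
    set u : Fin k → ℕ := fun j => xpart (y j) with hu
    set v : Fin k → ℕ := fun j => ypart (y j) with hv
    have heq : ∀ e : Fin k, u e + e.val * v e = u (nxt e) + e.val * v (nxt e) := by
      intro e
      exact hvN e
    set er : Finset (Fin k) := Finset.univ.erase j0 with her
    -- Step 1: sum both sides
    have hs1 : ∑ e : Fin k, e.val * v e = ∑ e : Fin k, e.val * v (nxt e) := by
      have hSu : ∑ e : Fin k, u (nxt e) = ∑ e : Fin k, u e :=
        Fintype.sum_bijective nxt nxt_bijective _ _ (fun e => rfl)
      have htot : ∑ e : Fin k, (u e + e.val * v e)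
          = ∑ e : Fin k, (u (nxt e) + e.val * v (nxt e)) :=
        Finset.sum_congr rfl (fun e _ => heq e)
      rw [Finset.sum_add_distrib, Finset.sum_add_distrib, hSu] at htot
      omega
    have hs2 : ∑ e : Fin k, e.val * v (nxt e) = ∑ e : Fin k, (prv e).val * v e :=
      Fintype.sum_bijective nxt nxt_bijective _ _
        (fun e => by rw [prv_nxt])
    -- Step 3: isolate vertex 0
    have hsplitL : ∑ e : Fin k, e.val * v e = ∑ e ∈ er, e.val * v e := by
      rw [← Finset.add_sum_erase Finset.univ _ (Finset.mem_univ j0)]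
      have : (j0 : Fin k).val * v j0 = 0 := by
        rw [show (j0 : Fin k).val = 0 from rfl, zero_mul]
      rw [this, zero_add]
    have hsplitR : ∑ e : Fin k, (prv e).val * v e
        = (k - 1) * v j0 + ∑ e ∈ er, (prv e).val * v e := by
      rw [← Finset.add_sum_erase Finset.univ _ (Finset.mem_univ j0)]
      congr 2
      rw [prv_val]
      simp [hj0]
    have hprv_er : ∀ e ∈ er, (prv e).val = e.val - 1 := by
      intro e he
      rw [prv_val]
      have hne : e ≠ j0 := (Finset.mem_erase.mp he).1
      have : e.val ≠ 0 := by
        intro h0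
        exact hne (Fin.ext h0)
      rw [if_neg this]
    have hsplitL2 : ∑ e ∈ er, e.val * v e
        = ∑ e ∈ er, (e.val - 1) * v e + ∑ e ∈ er, v e := by
      rw [← Finset.sum_add_distrib]
      apply Finset.sum_congr rfl
      intro e he
      have hne : e ≠ j0 := (Finset.mem_erase.mp he).1
      have h1 : e.val ≠ 0 := fun h0 => hne (Fin.ext h0)
      obtain ⟨w, hw⟩ := Nat.exists_eq_succ_of_ne_zero h1
      rw [hw]
      simp [Nat.succ_mul, Nat.succ_sub_one]
    have hsR2 : ∑ e ∈ er, (prv e).val * v e = ∑ e ∈ er, (e.val - 1) * v e :=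
      Finset.sum_congr rfl (fun e he => by rw [hprv_er e he])
    have hB : ∑ e ∈ er, v e = (k - 1) * v j0 := by
      have := hs1.trans hs2
      rw [hsplitL, hsplitR, hsplitL2, hsR2] at this
      omega
    -- Step 4: Behrend
    have hvc : ∀ e, v e = v j0 :=
      behrend_free hk d t R v (fun e => hymem (y e)) hB
    -- Step 5 and 6: x parts all equal
    have hup : ∀ e, u e = u (nxt e) := by
      intro e
      have h1 := heq e
      rw [hvc e, hvc (nxt e)] at h1
      omega
    have huc : ∀ e, u e = u j0 := by
      have key : ∀ i (h : i < k), u ⟨i, h⟩ = u j0 := by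
        intro i
        induction i with
        | zero => intro h; rfl
        | succ i ih =>
          intro h
          have hi : i < k := by omega
          have hnx : nxt ⟨i, hi⟩ = ⟨i + 1, h⟩ := by
            apply Fin.ext
            rw [nxt_val]
            have : i + 1 ≠ k := by omega
            simp [this]
          rw [← hnx, ← hup ⟨i, hi⟩]
          exact ih hi
      intro e
      have := key e.val e.isLt
      simpa using this
    -- Step 7: conclude all parties equal
    intro j
    exact hparts (y j) (y j0) (huc j) (hvc j)


/-! ### Assembling the upper bound -/

lemma upper (hk : 3 ≤ k) (ε : ℝ) (hε : 0 < ε) :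
    ∀ᶠ n : ℕ in Filter.atTop, ∃ m : ℕ,
      SLOCCTo (statePow (hyperGHZ Hc 2) m) (statePow (ghzState k 2) n)
        ∧ (m : ℝ) ≤ (1/2 + ε) * n := by
  classical
  set d : ℕ := (k + 1) * (⌈1/ε⌉₊ + 1) with hd
  have hd1 : 1 ≤ d := by
    have := Nat.mul_le_mul (show 1 ≤ k + 1 by omega) (show 1 ≤ ⌈1/ε⌉₊ + 1 by omega)
    omega
  set M : ℕ := (k - 1) + 2 * d with hM
  have hM1 : 1 ≤ M := by omega
  have hMreal : (M : ℝ) = (k : ℝ) - 1 + 2 * d := by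
    rw [hM]
    push_cast [Nat.cast_sub (show 1 ≤ k by omega)]
    ring
  have hMpos : (0:ℝ) < M := by
    rw [hMreal]
    have : (3:ℝ) ≤ k := by exact_mod_cast hk
    have : (1:ℝ) ≤ d := by exact_mod_cast hd1
    linarith
  have hdge : ((k:ℝ) + 1) / ε ≤ (d : ℝ) := by
    have h1 : (1/ε) ≤ (⌈1/ε⌉₊ : ℝ) := Nat.le_ceil _
    have h2 : (d:ℝ) = ((k:ℝ) + 1) * ((⌈1/ε⌉₊ : ℝ) + 1) := by rw [hd]; push_cast; ring
    have h3 : (0:ℝ) < (k:ℝ) + 1 := by positivity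
    rw [h2, div_eq_mul_inv]
    have h4 : (ε)⁻¹ ≤ (⌈1/ε⌉₊ : ℝ) + 1 := by
      rw [← one_div]
      linarith
    nlinarith
  have hεM : 2 * ((k:ℝ) + 1) ≤ ε * M := by
    have h1 : 2 * (d:ℝ) ≤ (M:ℝ) := by
      rw [hMreal]
      have : (3:ℝ) ≤ k := by exact_mod_cast hk
      linarith
    have h2 : ((k:ℝ)+1) ≤ ε * d := by
      rw [div_le_iff₀ hε] at hdge
      linarith [hdge]
    nlinarith
  have hratio : ((k:ℝ) + d) / M ≤ 1/2 + ε/4 := by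
    rw [div_le_iff₀ hMpos]
    have hkr : (3:ℝ) ≤ k := by exact_mod_cast hk
    have : (1/2 + ε/4) * M = (1/2) * M + (ε * M)/4 := by ring
    rw [this, hMreal]
    nlinarith
  set C : ℝ := (1/2 + ε/4) * (2*d) + (2*(k:ℝ) + d + 1) with hC
  have hCpos : 0 < C := by
    have : (0:ℝ) ≤ (d:ℝ) := Nat.cast_nonneg d
    have : (0:ℝ) ≤ (k:ℝ) := Nat.cast_nonneg k
    positivity
  filter_upwards [Filter.eventually_ge_atTop (⌈C / (3*ε/4)⌉₊)] with n hn
  have hnC : C ≤ (3*ε/4) * n := by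
    have h1 : C / (3*ε/4) ≤ (n:ℝ) := Nat.ceil_le.mp hn
    have h2 : (0:ℝ) < 3*ε/4 := by linarith
    calc C = (3*ε/4) * (C / (3*ε/4)) := by field_simp
      _ ≤ (3*ε/4) * n := by nlinarith
  set t : ℕ := (n + 2*d)/M + 1 with ht
  have ht1 : 1 ≤ t := by rw [ht]; exact Nat.le_add_left 1 _
  have hMt : n + 2*d + 1 ≤ M * t := by
    have h1 : M * ((n + 2*d)/M) + (n + 2*d) % M = n + 2*d := Nat.div_add_mod _ _
    have h2 : (n + 2*d) % M < M := Nat.mod_lt _ (by omega)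
    have h3 : M * t = M * ((n + 2*d)/M) + M := by rw [ht, Nat.mul_succ]
    omega
  obtain ⟨R, hR⟩ := exists_good_R d t ht1
  have hcard : 2^n ≤ 2^((k+d)*t) * (behrendSet k d t R).card := by
    have hYc : (behrendSet k d t R).card = (digitSet d t R).card := behrendSet_card
    have s1 : t * 2^(2*d) ≤ 2^(t + 2*d) := by
      rw [pow_add]
      exact Nat.mul_le_mul_right _ (le_of_lt (Nat.lt_two_pow_self (n := t)))
    have s2 : 2^(d*t) ≤ (digitSet d t R).card * 2^(t+2*d) :=
      le_trans hR (Nat.mul_le_mul_left _ s1)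
    have e0 : M + 1 = k + 2*d := by omega
    have s3 : n + (t + 2*d) ≤ (k+d)*t + d*t := by
      have e1 : (k+d)*t + d*t = (M+1)*t := by rw [e0]; ring
      have e2 : (M+1)*t = M*t + t := by ring
      omega
    have hchain : 2^n * 2^(t+2*d) ≤ (2^((k+d)*t) * (behrendSet k d t R).card) * 2^(t+2*d) := by
      calc 2^n * 2^(t+2*d) = 2^(n + (t+2*d)) := (pow_add 2 n _).symm
        _ ≤ 2^((k+d)*t + d*t) := Nat.pow_le_pow_right (by norm_num) s3
        _ = 2^((k+d)*t) * 2^(d*t) := pow_add _ _ _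
        _ ≤ 2^((k+d)*t) * ((digitSet d t R).card * 2^(t+2*d)) := Nat.mul_le_mul_left _ s2
        _ = (2^((k+d)*t) * (behrendSet k d t R).card) * 2^(t+2*d) := by rw [hYc]; ring
    exact Nat.le_of_mul_le_mul_right hchain (by positivity)
  refine ⟨(k+d)*t + k + 1, construction hk d t R n hcard, ?_⟩
  -- the rate bound
  have htle : (t:ℝ) ≤ ((n:ℝ) + 2*d)/M + 1 := by
    rw [ht]
    push_cast
    have h1 : ((((n + 2*d) : ℕ) / M : ℕ) : ℝ) ≤ (((n + 2*d) : ℕ) : ℝ) / (M:ℝ) :=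
      Nat.cast_div_le
    push_cast at h1
    linarith
  have htpos : (0:ℝ) ≤ (t:ℝ) := Nat.cast_nonneg t
  have hnpos : (0:ℝ) ≤ (n:ℝ) := Nat.cast_nonneg n
  have hdpos : (0:ℝ) ≤ (d:ℝ) := Nat.cast_nonneg d
  have hkpos : (0:ℝ) ≤ (k:ℝ) := Nat.cast_nonneg k
  have hcast : (((k+d)*t + k + 1 : ℕ) : ℝ) = ((k:ℝ)+d)*t + k + 1 := by push_cast; ring
  rw [hcast]
  have hstep1 : ((k:ℝ)+d)*t ≤ ((k:ℝ)+d) * (((n:ℝ) + 2*d)/M + 1) := by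
    apply mul_le_mul_of_nonneg_left htle
    positivity
  have hstep2 : ((k:ℝ)+d) * (((n:ℝ) + 2*d)/M) ≤ (1/2 + ε/4) * ((n:ℝ) + 2*d) := by
    have h1 : ((k:ℝ)+d) * (((n:ℝ) + 2*d)/M) = (((k:ℝ)+d)/M) * ((n:ℝ) + 2*d) := by
      field_simp
    rw [h1]
    apply mul_le_mul_of_nonneg_right hratio
    linarith
  have hfinal : ((k:ℝ)+d)*t + k + 1 ≤ (1/2 + ε/4) * n + C := by
    have : ((k:ℝ)+d) * (((n:ℝ) + 2*d)/M + 1)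
        = ((k:ℝ)+d) * (((n:ℝ) + 2*d)/M) + (k + d) := by ring
    rw [this] at hstep1
    have hexp : (1/2 + ε/4) * ((n:ℝ) + 2*d) = (1/2 + ε/4) * n + (1/2 + ε/4) * (2*d) := by
      ring
    rw [hC]
    linarith
  calc ((k:ℝ)+d)*t + k + 1 ≤ (1/2 + ε/4) * n + C := hfinal
    _ ≤ (1/2 + ε/4) * n + (3*ε/4) * n := by linarith
    _ = (1/2 + ε) * n := by ring

end GhzCycle

/-- For the cycle graph `C_k` on `[k]` (`k ≥ 3`), viewed as a hypergraph of EPR pairs,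
`ω(GHZ^{C_k}_2, GHZ_2) = 1/2`: asymptotically two `k`-party GHZ states per copy of the
cycle of EPR pairs can be obtained via SLOCC. -/
theorem ghz_cycle_rate {k : ℕ} (hk : 3 ≤ k) :
    AsympRateEq
      (hyperGHZ (fun e : Fin k =>
        ({e, ⟨(e.val + 1) % k, Nat.mod_lt _ (by omega)⟩} : Finset (Fin k))) 2)
      (ghzState k 2) (1 / 2 : ℝ) := by
  constructor
  · intro ε hε
    exact GhzCycle.upper hk ε hε
  · intro ε hε
    apply Filter.Eventually.of_forall
    intro n m hsl
    have hle := GhzCycle.lower_bound hk n m hsl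
    have h1 : (n : ℝ) ≤ 2 * m := by exact_mod_cast hle
    have h2 : (0:ℝ) ≤ (n:ℝ) := Nat.cast_nonneg n
    nlinarith
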